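/- arXiv:1903.05876 — 3 statements merged into one kernel-verified Lean document; each statement's English description precedes it below -/
import Mathlib

section
/- Let F be a free group of finite rank n (the free group on a set with n elements) and let H be a subgroup of F which is an elementary substructure of F in the first-order language of groups. Then H is finitely generated; more precisely, H is generated by at most n elements. -/
open FirstOrder Monoid

/-- The functions of the first-order language of groups:
multiplication (binary), inversion (unary), identity (constant). -/
inductive GroupFunc : ℕ → Type
  | mul : GroupFunc 2
  | inv : GroupFunc 1
  | one : GroupFunc 0

/-- The first-order language of groups. -/
def groupLang : FirstOrder.Language where
  Functions := GroupFunc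
  Relations := fun _ => Empty

/-- Every group is a structure for the language of groups in the standard way. -/
instance groupStructure (G : Type*) [Group G] : groupLang.Structure G where
  funMap {_} f v :=
    match f with
    | .mul => v 0 * v 1
    | .inv => (v 0)⁻¹
    | .one => 1
  RelMap {_} r := r.elim

/-- A subgroup `H` of `G` is an elementary subgroup if every first-order formula of the
language of groups holds of a tuple from `H` in `H` iff it holds in `G`. -/
def IsElementarySubgroup {G : Type*} [Group G] (H : Subgroup G) : Prop :=
  ∀ (n : ℕ) (φ : groupLang.Formula (Fin n)) (v : Fin n → H),
    φ.Realize v ↔ φ.Realize (fun i => (v i : G))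

/-- A subgroup `H` of `F` is a free factor if there is a subgroup `K` such that the canonical
homomorphism `H ∗ K → F` induced by the two inclusions is an isomorphism. -/
def IsFreeFactor {F : Type*} [Group F] (H : Subgroup F) : Prop :=
  ∃ K : Subgroup F, Function.Bijective (Coprod.lift H.subtype K.subtype)

namespace ElemAux

open FirstOrder Language Subgroup

/-- Evaluation of a term lies in the subgroup generated by the values of the variables. -/
lemma term_realize_mem {G : Type*} [Group G] {α : Type*} (K : Subgroup G) (v : α → G)
    (hv : ∀ i, v i ∈ K) (t : groupLang.Term α) : t.realize v ∈ K := by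
  induction t with
  | var i => exact hv i
  | func f ts ih =>
    cases f with
    | mul => exact mul_mem (ih 0) (ih 1)
    | inv => exact inv_mem (ih 0)
    | one => exact one_mem K

/-- Every element of a group generated by `a i`'s is the value of a term. -/
lemma exists_term {G : Type*} [Group G] {m : ℕ} (a : Fin m → G)
    (ha : Subgroup.closure (Set.range a) = ⊤) (u : G) :
    ∃ t : groupLang.Term (Fin m), t.realize a = u := by
  have hu : u ∈ Subgroup.closure (Set.range a) := ha ▸ Subgroup.mem_top u
  induction hu using Subgroup.closure_induction with
  | mem x hx =>
    obtain ⟨i, rfl⟩ := hx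
    exact ⟨Term.var i, rfl⟩
  | one => exact ⟨Term.func GroupFunc.one (fun i => i.elim0), rfl⟩
  | mul x y hx hy ihx ihy =>
    obtain ⟨t1, h1⟩ := ihx
    obtain ⟨t2, h2⟩ := ihy
    exact ⟨Term.func GroupFunc.mul ![t1, t2], by
      show Term.realize a (![t1, t2] 0) * Term.realize a (![t1, t2] 1) = x * y
      simp [h1, h2]⟩
  | inv x hx ihx =>
    obtain ⟨t1, h1⟩ := ihx
    exact ⟨Term.func GroupFunc.inv ![t1], by
      show (Term.realize a (![t1] 0))⁻¹ = x⁻¹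
      simp [h1]⟩

/-- The key consequence of elementarity: every finite tuple of `H` lies in a subgroup
of `H` generated by at most `n` elements. -/
lemma key {n : ℕ} {F : Type*} [Group F] (e : F ≃* FreeGroup (Fin n))
    (H : Subgroup F) (hH : IsElementarySubgroup H)
    {m : ℕ} (u : Fin m → H) :
    ∃ b : Fin n → H, ∀ j, u j ∈ Subgroup.closure (Set.range b) := by
  set a : Fin n → F := fun i => e.symm (FreeGroup.of i) with ha_def
  have ha : Subgroup.closure (Set.range a) = ⊤ := by
    have h1 : Set.range a = e.symm.toMonoidHom '' Set.range (FreeGroup.of : Fin n → _) := by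
      rw [← Set.range_comp]; rfl
    rw [h1, ← MonoidHom.map_closure, FreeGroup.closure_range_of,
      Subgroup.map_top_of_surjective _ e.symm.surjective]
  have ht : ∀ j : Fin m, ∃ t : groupLang.Term (Fin n), t.realize a = (u j : F) :=
    fun j => exists_term a ha (u j : F)
  choose t htt using ht
  -- the formula ∃ x₁ ... xₙ, ⋀ j, uⱼ = tⱼ(x₁,...,xₙ)
  set ψ : Fin m → groupLang.BoundedFormula (Fin m) n :=
    fun j => Term.bdEqual (Term.var (Sum.inl j)) ((t j).relabel Sum.inr) with hψ
  set φ : groupLang.Formula (Fin m) :=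
    (((List.finRange m).map ψ).foldr (· ⊓ ·) ⊤).exs with hφ
  have hrealF : φ.Realize (fun j => (u j : F)) := by
    rw [hφ, BoundedFormula.realize_exs]
    refine ⟨a, ?_⟩
    rw [BoundedFormula.realize_foldr_inf]
    intro χ hχ
    simp only [List.mem_map, List.mem_finRange] at hχ
    obtain ⟨j, _, rfl⟩ := hχ
    rw [hψ]
    simp only [BoundedFormula.realize_bdEqual, Term.realize_var, Term.realize_relabel]
    rw [show (Sum.elim (fun j => (u j : F)) a ∘ Sum.inr) = a from rfl]
    exact (htt j).symm
  have hrealH : φ.Realize u := (hH m φ u).mpr hrealF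
  rw [hφ, BoundedFormula.realize_exs] at hrealH
  obtain ⟨b, hb⟩ := hrealH
  rw [BoundedFormula.realize_foldr_inf] at hb
  refine ⟨b, fun j => ?_⟩
  have hj := hb (ψ j) (List.mem_map.2 ⟨j, List.mem_finRange j, rfl⟩)
  rw [hψ] at hj
  simp only [BoundedFormula.realize_bdEqual, Term.realize_var, Term.realize_relabel] at hj
  rw [show Sum.elim u b (Sum.inl j) = u j from rfl] at hj
  rw [hj]
  exact term_realize_mem _ b (fun i => Subgroup.subset_closure (Set.mem_range_self i)) (t j)

/-- A free group of rank `m+1` is not generated by `k ≤ m` elements. -/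
lemma freeGroup_not_gen {m k : ℕ} (hk : k ≤ m) (g : Fin k → FreeGroup (Fin (m + 1)))
    (hg : Subgroup.closure (Set.range g) = ⊤) : False := by
  set ab : FreeGroup (Fin (m + 1)) →* Multiplicative (Fin (m + 1) → ℤ) :=
    FreeGroup.lift (fun j => Multiplicative.ofAdd (Pi.single j (1 : ℤ))) with hab
  set S : Set (Fin (m + 1) → ℤ) := Set.range (fun i => (ab (g i)).toAdd) with hS
  set P : Subgroup (Multiplicative (Fin (m + 1) → ℤ)) :=
    AddSubgroup.toSubgroup (Submodule.span ℤ S).toAddSubgroup with hP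
  have hsingle : ∀ j : Fin (m + 1), Pi.single j (1 : ℤ) ∈ Submodule.span ℤ S := by
    intro j
    have h1 : ab (FreeGroup.of j) ∈ Subgroup.map ab ⊤ := ⟨_, Subgroup.mem_top _, rfl⟩
    rw [← hg, MonoidHom.map_closure] at h1
    have h2 : Subgroup.closure (ab '' Set.range g) ≤ P := by
      rw [Subgroup.closure_le]
      rintro x ⟨y, ⟨i, rfl⟩, rfl⟩
      have hmem : ((ab (g i)).toAdd) ∈ Submodule.span ℤ S := Submodule.subset_span ⟨i, rfl⟩
      exact hmem
    have h3 := h2 h1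
    rw [hP] at h3
    have h4 : ab (FreeGroup.of j) = Multiplicative.ofAdd (Pi.single j (1 : ℤ)) :=
      FreeGroup.lift_apply_of
    rw [h4] at h3
    exact h3
  have hspan : Submodule.span ℤ S = ⊤ := by
    rw [eq_top_iff]
    intro x _
    have hx : x = ∑ j, Pi.single j (x j) := (Finset.univ_sum_single x).symm
    rw [hx]
    refine Submodule.sum_mem _ (fun j _ => ?_)
    have hsm : Pi.single j (x j) = ((x j) • Pi.single j (1 : ℤ) : Fin (m + 1) → ℤ) := by
      ext i
      by_cases h : i = j
      · subst h; simp
      · simp [Pi.single_eq_of_ne h]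
    rw [hsm]
    exact Submodule.smul_mem _ _ (hsingle j)
  have hrank := rank_span_le (R := ℤ) S
  rw [hspan] at hrank
  rw [rank_top] at hrank
  have h5 : Module.rank ℤ (Fin (m + 1) → ℤ) = (m + 1 : ℕ) := by
    simpa using rank_fin_fun (R := ℤ) (m + 1)
  rw [h5] at hrank
  have h6 : Cardinal.mk S ≤ (k : Cardinal) := by
    rw [hS]
    exact (Cardinal.mk_range_le).trans (by simp)
  have h7 : ((m + 1 : ℕ) : Cardinal) ≤ (k : Cardinal) := hrank.trans h6
  rw [Nat.cast_le] at h7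
  omega

end ElemAux

theorem elementary_subgroup_generated_by_at_most_rank_many_elements
    {n : ℕ} {F : Type*} [Group F] (e : F ≃* FreeGroup (Fin n))
    (H : Subgroup F) (hH : IsElementarySubgroup H) :
    ∃ s : Finset F, s.card ≤ n ∧ Subgroup.closure (s : Set F) = H := by
  classical
  haveI : IsFreeGroup F := IsFreeGroup.ofMulEquiv e.symm
  set X := IsFreeGroup.Generators ↥H with hX
  have hgen : Subgroup.closure (Set.range (IsFreeGroup.of : X → ↥H)) = ⊤ := by
    have h1 : Set.range (IsFreeGroup.of : X → ↥H)
        = (IsFreeGroup.mulEquiv ↥H).toMonoidHom '' Set.range FreeGroup.of := by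
      rw [← Set.range_comp]; rfl
    rw [h1, ← MonoidHom.map_closure, FreeGroup.closure_range_of,
      Subgroup.map_top_of_surjective _ (IsFreeGroup.mulEquiv ↥H).surjective]
  by_cases hbig : Nonempty (Fin (n + 1) ↪ X)
  · exfalso
    obtain ⟨f⟩ := hbig
    obtain ⟨b, hb⟩ := ElemAux.key e H hH (fun j => IsFreeGroup.of (f j))
    set ρ : ↥H →* FreeGroup (Fin (n + 1)) :=
      IsFreeGroup.lift (fun x => if h : ∃ j, f j = x then FreeGroup.of h.choose else 1) with hρdef
    have hρ : ∀ j, ρ (IsFreeGroup.of (f j)) = FreeGroup.of j := by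
      intro j
      rw [hρdef, IsFreeGroup.lift_of, dif_pos (⟨j, rfl⟩ : ∃ j', f j' = f j)]
      congr 1
      exact f.injective (⟨j, rfl⟩ : ∃ j', f j' = f j).choose_spec
    have hmap : ∀ j, FreeGroup.of j ∈ Subgroup.closure (Set.range (ρ ∘ b)) := by
      intro j
      have hmem : ρ (IsFreeGroup.of (f j)) ∈ Subgroup.map ρ (Subgroup.closure (Set.range b)) :=
        ⟨_, hb j, rfl⟩
      rw [MonoidHom.map_closure, ← Set.range_comp] at hmem
      rw [← hρ j]
      exact hmem
    have htop : Subgroup.closure (Set.range (ρ ∘ b)) = ⊤ := by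
      rw [eq_top_iff, ← FreeGroup.closure_range_of (Fin (n + 1)), Subgroup.closure_le]
      rintro x ⟨j, rfl⟩
      exact hmap j
    exact ElemAux.freeGroup_not_gen (le_refl n) (ρ ∘ b) htop
  · haveI : Finite X := by
      by_contra hinf
      rw [not_finite_iff_infinite] at hinf
      exact hbig ⟨Fin.valEmbedding.trans (Infinite.natEmbedding X)⟩
    haveI : Fintype X := Fintype.ofFinite X
    have hcard : Fintype.card X ≤ n := by
      by_contra hc
      push_neg at hc
      exact hbig (Function.Embedding.nonempty_iff_card_le.mpr (by simpa using hc))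
    refine ⟨Finset.image (fun x : X => ((IsFreeGroup.of x : ↥H) : F)) Finset.univ, ?_, ?_⟩
    · exact Finset.card_image_le.trans (by simpa using hcard)
    · have hset : ((Finset.image (fun x : X => ((IsFreeGroup.of x : ↥H) : F)) Finset.univ : Finset F) : Set F)
          = H.subtype '' Set.range (IsFreeGroup.of : X → ↥H) := by
        rw [Finset.coe_image, Finset.coe_univ, Set.image_univ, ← Set.range_comp]
        rfl
      rw [hset, ← MonoidHom.map_closure, hgen, ← MonoidHom.range_eq_map, Subgroup.subtype_range]
end

section
/- Let F be the free group on two generators a, b, and let w = a·[a,b] = a·(a b a⁻¹ b⁻¹). Then the cyclic subgroup ⟨w⟩ generated by w is a retract of F (there exists a group homomorphism r : F → F with image contained in ⟨w⟩ and r(w) = w), but ⟨w⟩ is not a free factor of F. -/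
open FirstOrder Monoid

section AuxRNF

variable {F : Type*} [Group F] {G : Type*} [Group G]

/-- Two homs out of a cyclic subgroup agreeing on the generator are equal. -/
theorem closure_singleton_hom_ext {w : F}
    (f g : (Subgroup.closure {w} : Subgroup F) →* G)
    (h : f ⟨w, Subgroup.mem_closure_singleton_self w⟩
       = g ⟨w, Subgroup.mem_closure_singleton_self w⟩) : f = g := by
  ext ⟨x, hx⟩
  obtain ⟨n, rfl⟩ := Subgroup.mem_closure_singleton.mp hx
  have hx' : (⟨w ^ n, hx⟩ : (Subgroup.closure {w} : Subgroup F))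
      = (⟨w, Subgroup.mem_closure_singleton_self w⟩ : (Subgroup.closure {w} : Subgroup F)) ^ n := by
    ext; simp
  rw [hx', map_zpow, map_zpow, h]

theorem card_fiber_eq {w : F} {K : Subgroup F}
    (hbij : Function.Bijective (Coprod.lift (Subgroup.closure {w}).subtype K.subtype))
    (ψ : G → ((Subgroup.closure {w} : Subgroup F) →* G))
    (hψ : ∀ x, ψ x ⟨w, Subgroup.mem_closure_singleton_self w⟩ = x) (x : G) :
    Nat.card {g : F →* G // g w = x} = Nat.card (K →* G) := by
  let e : Coprod (Subgroup.closure {w} : Subgroup F) K ≃* F := MulEquiv.ofBijective _ hbij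
  have he : ∀ z, e z = Coprod.lift (Subgroup.closure {w}).subtype K.subtype z := fun z => rfl
  have hwH : w ∈ Subgroup.closure {w} := Subgroup.mem_closure_singleton_self w
  have hes_inl : e.symm w = Coprod.inl ⟨w, hwH⟩ := by
    apply e.injective
    rw [MulEquiv.apply_symm_apply, he, Coprod.lift_apply_inl]
    rfl
  have hes_inr : ∀ k : K, e.symm (k : F) = Coprod.inr k := by
    intro k
    apply e.injective
    rw [MulEquiv.apply_symm_apply, he, Coprod.lift_apply_inr]
    rfl
  refine Nat.card_congr ⟨fun g => g.1.comp K.subtype, fun φ =>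
    ⟨(Coprod.lift (ψ x) φ).comp e.symm.toMonoidHom, ?_⟩, ?_, ?_⟩
  · show (Coprod.lift (ψ x) φ) (e.symm w) = x
    rw [hes_inl, Coprod.lift_apply_inl, hψ]
  · rintro ⟨g, hg⟩
    apply Subtype.ext
    show (Coprod.lift (ψ x) (g.comp K.subtype)).comp e.symm.toMonoidHom = g
    have key : Coprod.lift (ψ x) (g.comp K.subtype) = g.comp e.toMonoidHom := by
      apply Coprod.hom_ext
      · rw [Coprod.lift_comp_inl]
        apply closure_singleton_hom_ext
        show ψ x ⟨w, hwH⟩ = g (e (Coprod.inl ⟨w, hwH⟩))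
        rw [hψ, he, Coprod.lift_apply_inl]
        exact hg.symm
      · rw [Coprod.lift_comp_inr]
        ext k
        show g (k : F) = g (e (Coprod.inr k))
        rw [he, Coprod.lift_apply_inr]
        rfl
    rw [key]
    ext y
    show g (e (e.symm y)) = g y
    rw [MulEquiv.apply_symm_apply]
  · intro φ
    ext k
    show (Coprod.lift (ψ x) φ) (e.symm (k : F)) = φ k
    rw [hes_inr, Coprod.lift_apply_inr]

end AuxRNF

section AuxRNF2

variable {G : Type*} [Group G]

def fiberEquivPairs (x : G) :
    {g : FreeGroup (Fin 2) →* G //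
      g (FreeGroup.of 0 * (FreeGroup.of 0 * FreeGroup.of 1 * (FreeGroup.of 0)⁻¹ * (FreeGroup.of 1)⁻¹)) = x} ≃
    {pq : G × G // pq.1 * (pq.1 * pq.2 * pq.1⁻¹ * pq.2⁻¹) = x} where
  toFun g := ⟨(g.1 (FreeGroup.of 0), g.1 (FreeGroup.of 1)), by
    have := g.2; simpa [map_mul, map_inv] using this⟩
  invFun pq := ⟨FreeGroup.lift ![pq.1.1, pq.1.2], by
    simpa [map_mul, map_inv, FreeGroup.lift_apply_of] using pq.2⟩
  left_inv g := by
    apply Subtype.ext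
    apply FreeGroup.ext_hom
    intro i
    fin_cases i <;> simp [FreeGroup.lift_apply_of]
  right_inv pq := by
    apply Subtype.ext
    simp [FreeGroup.lift_apply_of]

end AuxRNF2

theorem retract_not_free_factor_example :
    let a : FreeGroup (Fin 2) := FreeGroup.of 0
    let b : FreeGroup (Fin 2) := FreeGroup.of 1
    let w : FreeGroup (Fin 2) := a * (a * b * a⁻¹ * b⁻¹)
    (∃ r : FreeGroup (Fin 2) →* FreeGroup (Fin 2),
        (∀ x, r x ∈ Subgroup.closure {w}) ∧ r w = w) ∧
      ¬ IsFreeFactor (Subgroup.closure {w}) := by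
  intro a b w
  have hwval : w = FreeGroup.of 0 * (FreeGroup.of 0 * FreeGroup.of 1 *
      (FreeGroup.of 0)⁻¹ * (FreeGroup.of 1)⁻¹) := rfl
  constructor
  · refine ⟨FreeGroup.lift (fun i => if i = 0 then w else 1), ?_, ?_⟩
    · intro x
      induction x using FreeGroup.induction_on with
      | C1 => exact Subgroup.one_mem _
      | of i =>
        by_cases hi : i = 0
        · subst hi
          show FreeGroup.lift _ (FreeGroup.of 0) ∈ _
          rw [FreeGroup.lift_apply_of]
          simp only [if_pos rfl]
          exact Subgroup.mem_closure_singleton_self w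
        · show FreeGroup.lift _ (FreeGroup.of i) ∈ _
          rw [FreeGroup.lift_apply_of, if_neg hi]
          exact Subgroup.one_mem _
      | inv_of i h => rw [map_inv]; exact Subgroup.inv_mem _ h
      | mul x y hx hy => rw [map_mul]; exact Subgroup.mul_mem _ hx hy
    · rw [hwval]
      simp only [map_mul, map_inv, FreeGroup.lift_apply_of]
      norm_num
      group
  · rintro ⟨K, hbij⟩
    let D := DihedralGroup 3
    let ψ : D → ((Subgroup.closure {w} : Subgroup (FreeGroup (Fin 2))) →* D) :=
      fun x => (zpowersHom D x).comp
        ((FreeGroup.lift fun i => if i = 0 then Multiplicative.ofAdd (1 : ℤ) else 1).comp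
          (Subgroup.closure {w}).subtype)
    have hψ : ∀ x, ψ x ⟨w, Subgroup.mem_closure_singleton_self w⟩ = x := by
      intro x
      show zpowersHom D x
        ((FreeGroup.lift fun i : Fin 2 => if i = 0 then Multiplicative.ofAdd (1 : ℤ) else 1) w) = x
      rw [hwval]
      simp [map_mul, map_inv, FreeGroup.lift_apply_of, zpowersHom_apply]
    have h1 := card_fiber_eq hbij ψ hψ 1
    have h2 := card_fiber_eq hbij ψ hψ (DihedralGroup.sr 0)
    have e1 := Nat.card_congr (fiberEquivPairs (G := D) 1)
    have e2 := Nat.card_congr (fiberEquivPairs (G := D) (DihedralGroup.sr 0))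
    have h1' : Nat.card {g : FreeGroup (Fin 2) →* D //
        g (FreeGroup.of 0 * (FreeGroup.of 0 * FreeGroup.of 1 *
          (FreeGroup.of 0)⁻¹ * (FreeGroup.of 1)⁻¹)) = 1} = Nat.card (K →* D) := h1
    have h2' : Nat.card {g : FreeGroup (Fin 2) →* D //
        g (FreeGroup.of 0 * (FreeGroup.of 0 * FreeGroup.of 1 *
          (FreeGroup.of 0)⁻¹ * (FreeGroup.of 1)⁻¹)) = DihedralGroup.sr 0} = Nat.card (K →* D) := h2
    have key : Nat.card {pq : D × D // pq.1 * (pq.1 * pq.2 * pq.1⁻¹ * pq.2⁻¹) = 1}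
        = Nat.card {pq : D × D // pq.1 * (pq.1 * pq.2 * pq.1⁻¹ * pq.2⁻¹) = DihedralGroup.sr 0} :=
      e1.symm.trans (h1'.trans (h2'.symm.trans e2))
    rw [Nat.card_eq_fintype_card, Nat.card_eq_fintype_card] at key
    exact absurd key (by decide)
end

section
/- Let F be a free group and S a nonabelian subgroup of F. Then the centralizer of S in F is trivial: if g ∈ F satisfies g·s = s·g for all s ∈ S, then g = 1. -/
open FirstOrder Monoid

namespace FGAux

open FreeGroup List

variable {α : Type*}

def Reduced (L : List (α × Bool)) : Prop :=
  L.Chain' fun p q => ¬(p.1 = q.1 ∧ p.2 = !q.2)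

theorem reduce_eq_self [DecidableEq α] {L : List (α × Bool)} (h : Reduced L) :
    FreeGroup.reduce L = L := by
  induction L with
  | nil => rfl
  | cons x t ih =>
    have ht : Reduced t := h.tail
    rw [FreeGroup.reduce.cons, ih ht]
    cases t with
    | nil => rfl
    | cons hd tl =>
      have hx : ¬(x.1 = hd.1 ∧ x.2 = !hd.2) := (List.isChain_cons_cons.mp h).1
      simp only [hx, if_false]

theorem reduced_reduce [DecidableEq α] (L : List (α × Bool)) :
    Reduced (FreeGroup.reduce L) := by
  induction L with
  | nil => exact List.isChain_nil
  | cons x t ih =>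
    rw [FreeGroup.reduce.cons]
    rcases h : FreeGroup.reduce t with _ | ⟨hd, tl⟩
    · exact List.isChain_singleton _
    · rw [h] at ih
      by_cases hc : x.1 = hd.1 ∧ x.2 = !hd.2
      · simp only [hc, if_true]
        exact ih.tail
      · simp only [hc, if_false]
        exact List.isChain_cons_cons.mpr ⟨hc, ih⟩

theorem reduced_toWord [DecidableEq α] (x : FreeGroup α) : Reduced x.toWord := by
  rw [← FreeGroup.reduce_toWord]
  exact reduced_reduce _

theorem replicate_of_cons_eq_append {β : Type*} {l : List β} {a : β}
    (h : a :: l = l ++ [a]) : l = List.replicate l.length a := by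
  induction l with
  | nil => rfl
  | cons x t ih =>
    rw [List.cons_append] at h
    obtain ⟨rfl, h2⟩ := List.cons_eq_cons.mp h
    rw [List.length_cons, List.replicate_succ, ← ih h2]

theorem eq_one_of_commute_of_ne {a b : α} (hab : a ≠ b) {z : FreeGroup α}
    (ha : Commute z (FreeGroup.of a)) (hb : Commute z (FreeGroup.of b)) : z = 1 := by
  classical
  by_contra hz
  -- commuting with single letters
  have hofmk : ∀ c : α, FreeGroup.of c = FreeGroup.mk [(c, true)] := fun _ => rfl
  have hinvmk : ∀ c : α, (FreeGroup.of c)⁻¹ = FreeGroup.mk [(c, false)] := by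
    intro c
    rw [hofmk, FreeGroup.inv_mk]
    rfl
  have hletter : ∀ ℓ : α × Bool, ℓ.1 = a ∨ ℓ.1 = b → Commute z (FreeGroup.mk [ℓ]) := by
    rintro ⟨c, s⟩ hc
    have hcomm : Commute z (FreeGroup.of c) := by
      rcases hc with rfl | rfl
      · exact ha
      · exact hb
    cases s
    · rw [← hinvmk]; exact hcomm.inv_right
    · rw [← hofmk]; exact hcomm
  set w := z.toWord with hwdef
  have hwne : w ≠ [] := fun h => hz (FreeGroup.toWord_eq_nil_iff.mp h)
  have hwred : Reduced w := reduced_toWord z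
  -- main step
  have step : ∀ ℓ : α × Bool, ℓ.1 = a ∨ ℓ.1 = b →
      w.head hwne ≠ (ℓ.1, !ℓ.2) → w.getLast hwne ≠ (ℓ.1, !ℓ.2) →
      ℓ :: w = w ++ [ℓ] := by
    intro ℓ hℓ hh hl
    have hpair : ∀ y : α × Bool, y = w.head hwne ∨ y = w.getLast hwne →
        ¬(ℓ.1 = y.1 ∧ ℓ.2 = !y.2) ∧ ¬(y.1 = ℓ.1 ∧ y.2 = !ℓ.2) := by
      intro y hy
      have hyne : y ≠ (ℓ.1, !ℓ.2) := by
        rcases hy with rfl | rfl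
        · exact hh
        · exact hl
      constructor
      · rintro ⟨h1, h2⟩
        exact hyne (Prod.ext h1.symm (by rw [h2, Bool.not_not]))
      · rintro ⟨h1, h2⟩
        exact hyne (Prod.ext h1 h2)
    have h1 : Reduced (ℓ :: w) := by
      rw [Reduced, List.Chain', List.isChain_cons]
      refine ⟨?_, hwred⟩
      intro y hy
      have : y = w.head hwne := by
        rw [List.head?_eq_head hwne, Option.mem_some_iff] at hy
        exact hy.symm
      exact (hpair y (Or.inl this)).1
    have h2 : Reduced (w ++ [ℓ]) := by
      rw [Reduced, List.Chain', List.isChain_append]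
      refine ⟨hwred, List.isChain_singleton _, ?_⟩
      intro x hx y hy
      have hx' : x = w.getLast hwne := by
        rw [List.getLast?_eq_getLast hwne, Option.mem_some_iff] at hx
        exact hx.symm
      have hy' : y = ℓ := by
        simp only [List.head?_cons, Option.mem_some_iff] at hy
        exact hy.symm
      subst hy'
      exact (hpair x (Or.inr hx')).2
    have e1 : (FreeGroup.mk [ℓ] * z).toWord = ℓ :: w := by
      conv_lhs => rw [show z = FreeGroup.mk w from (FreeGroup.mk_toWord).symm]
      rw [FreeGroup.mul_mk, FreeGroup.toWord_mk, List.singleton_append, reduce_eq_self h1]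
    have e2 : (z * FreeGroup.mk [ℓ]).toWord = w ++ [ℓ] := by
      conv_lhs => rw [show z = FreeGroup.mk w from (FreeGroup.mk_toWord).symm]
      rw [FreeGroup.mul_mk, FreeGroup.toWord_mk, reduce_eq_self h2]
    rw [← e1, ← e2, (hletter ℓ hℓ).eq]
  -- choose a suitable letter
  obtain ⟨ℓ, hℓab, hh, hl⟩ : ∃ ℓ : α × Bool, (ℓ.1 = a ∨ ℓ.1 = b) ∧
      w.head hwne ≠ (ℓ.1, !ℓ.2) ∧ w.getLast hwne ≠ (ℓ.1, !ℓ.2) := by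
    by_cases h1 : w.head hwne ≠ (a, false) ∧ w.getLast hwne ≠ (a, false)
    · exact ⟨(a, true), Or.inl rfl, h1.1, h1.2⟩
    by_cases h2 : w.head hwne ≠ (a, true) ∧ w.getLast hwne ≠ (a, true)
    · exact ⟨(a, false), Or.inl rfl, h2.1, h2.2⟩
    push_neg at h1 h2
    have hfa : (w.head hwne).1 = a ∧ (w.getLast hwne).1 = a := by
      by_cases hh0 : w.head hwne = (a, false)
      · have hne : w.head hwne ≠ (a, true) := by rw [hh0]; simp
        have hl0 := h2 hne
        exact ⟨by rw [hh0], by rw [hl0]⟩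
      · have hl0 := h1 hh0
        have hh0' : w.head hwne = (a, true) := by
          by_contra hc
          have := h2 hc
          rw [hl0] at this
          simp at this
        exact ⟨by rw [hh0'], by rw [hl0]⟩
    refine ⟨(b, true), Or.inr rfl, ?_, ?_⟩
    · intro h
      exact hab (by rw [← hfa.1, h])
    · intro h
      exact hab (by rw [← hfa.2, h])
  have hrep : w = List.replicate w.length ℓ :=
    replicate_of_cons_eq_append (step ℓ hℓab hh hl)
  -- the other generator
  obtain ⟨d, hdab, hd⟩ : ∃ d : α, (d = a ∨ d = b) ∧ d ≠ ℓ.1 := by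
    rcases hℓab with h | h
    · exact ⟨b, Or.inr rfl, by rw [h]; exact hab.symm⟩
    · exact ⟨a, Or.inl rfl, by rw [h]; exact hab⟩
  have hlen : w.length ≠ 0 := fun h => hwne (List.length_eq_zero_iff.mp h)
  obtain ⟨n, hn⟩ := Nat.exists_eq_succ_of_ne_zero hlen
  have hrep' : w = List.replicate (n + 1) ℓ := by rw [hrep, hn]
  have hhead : w.head hwne = ℓ := by
    have h1 : w.head? = some ℓ := by rw [hrep', List.replicate_succ, List.head?_cons]
    rw [List.head?_eq_head hwne] at h1
    exact Option.some.inj h1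
  have hh2 : w.head hwne ≠ ((d, true).1, !(d, true).2) := by
    rw [hhead]
    intro h
    exact hd (congrArg Prod.fst h).symm
  have hlast : w.getLast hwne = ℓ := by
    have h1 : w.getLast? = some ℓ := by
      rw [hrep', List.getLast?_eq_getLast (by simp), List.getLast_replicate_succ]
    rw [List.getLast?_eq_getLast hwne] at h1
    exact Option.some.inj h1
  have hl2 : w.getLast hwne ≠ ((d, true).1, !(d, true).2) := by
    rw [hlast]
    intro h
    exact hd (congrArg Prod.fst h).symm
  have heq2 := step (d, true) hdab hh2 hl2
  have hrep2 : w = List.replicate w.length (d, true) :=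
    replicate_of_cons_eq_append heq2
  rw [hn] at hrep2
  have hfin := hrep'.symm.trans hrep2
  rw [List.replicate_succ, List.replicate_succ] at hfin
  have hℓd : ℓ = (d, true) := (List.cons_eq_cons.mp hfin).1
  exact hd (congrArg Prod.fst hℓd).symm


theorem commute_of_subsingleton {α : Type*} [Subsingleton α] (u v : FreeGroup α) :
    Commute u v := by
  have key : ∀ (x : α) (v : FreeGroup α), Commute (FreeGroup.of x) v := by
    intro x v
    refine FreeGroup.induction_on v (Commute.one_right _) (fun y => ?_)
      (fun y h => h.inv_right) (fun y z hy hz => hy.mul_right hz)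
    rw [Subsingleton.elim y x]
  refine FreeGroup.induction_on u (Commute.one_left _) (fun y => key y v)
    (fun y h => h.inv_left) (fun y z hy hz => hy.mul_left hz)

/-- A free group with a nontrivial central element is commutative. -/
theorem commute_of_central {G : Type*} [Group G] [IsFreeGroup G] {z : G} (hz1 : z ≠ 1)
    (hzc : ∀ x : G, Commute z x) (x y : G) : Commute x y := by
  classical
  set e := IsFreeGroup.toFreeGroup (G := G) with he
  by_cases hsub : Subsingleton (IsFreeGroup.Generators G)
  · have := commute_of_subsingleton (e x) (e y)
    have h2 : Commute (e.symm (e x)) (e.symm (e y)) := this.map e.symm.toMonoidHom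
    simpa using h2
  · obtain ⟨a, b, hab⟩ := (not_subsingleton_iff_nontrivial.mp hsub).exists_pair_ne
    have hza : Commute (e z) (FreeGroup.of a) := by
      have := (hzc (e.symm (FreeGroup.of a))).map e.toMonoidHom
      simpa using this
    have hzb : Commute (e z) (FreeGroup.of b) := by
      have := (hzc (e.symm (FreeGroup.of b))).map e.toMonoidHom
      simpa using this
    have : e z = 1 := eq_one_of_commute_of_ne hab hza hzb
    exact absurd (by simpa using congrArg e.symm this) hz1

end FGAux

theorem centralizer_of_nonabelian_subgroup_trivial
    {F : Type*} [Group F] [IsFreeGroup F] (S : Subgroup F)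
    (hS : ∃ s t : S, s * t ≠ t * s)
    (g : F) (hg : ∀ s ∈ S, g * s = s * g) : g = 1 := by
  by_contra hg1
  obtain ⟨s, t, hst⟩ := hS
  set C := Subgroup.centralizer ({g} : Set F) with hC
  have hmem : ∀ x : F, (∀ h ∈ ({g} : Set F), h * x = x * h) → x ∈ C :=
    fun x hx => Subgroup.mem_centralizer_iff.mpr hx
  have hsC : (s : F) ∈ C := hmem _ (by rintro h rfl; exact hg s s.2)
  have htC : (t : F) ∈ C := hmem _ (by rintro h rfl; exact hg t t.2)
  have hgC : g ∈ C := hmem _ (by rintro h rfl; rfl)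
  set gc : C := ⟨g, hgC⟩
  set sc : C := ⟨(s : F), hsC⟩
  set tc : C := ⟨(t : F), htC⟩
  have hgc1 : gc ≠ 1 := fun h => hg1 (congrArg Subtype.val h)
  have hcentral : ∀ x : C, Commute gc x := by
    intro x
    have hx := Subgroup.mem_centralizer_iff.mp x.2 g rfl
    exact Subtype.ext hx
  have : Commute sc tc := FGAux.commute_of_central hgc1 hcentral sc tc
  apply hst
  have hF : (s : F) * (t : F) = (t : F) * (s : F) := congrArg Subtype.val this
  exact Subtype.ext hF
end
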